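/- Let M be a FINITE type equipped with a binary operation · and a distinguished element e, and suppose that (((e·x)·(y·z))·y)·z = x holds for all x, y, z ∈ M (formula 81L2). Then (M, ·) is a Boolean group with identity element e: the operation · is associative and commutative, e·x = x for all x, and x·x = e for all x. -/

import Mathlib

theorem finite_single_axiom_81L2
    (M : Type) [Finite M] (mul : M → M → M) (e : M)
    (h : ∀ x y z : M, mul (mul (mul (mul e x) (mul y z)) y) z = x) :
    (∀ x y z : M, mul (mul x y) z = mul x (mul y z)) ∧
    (∀ x y : M, mul x y = mul y x) ∧
    (∀ x : M, mul e x = x) ∧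
    (∀ x : M, mul x x = e) := by
  have hLinj : Function.Injective (fun x => mul e x) := by
    intro a b hab
    have ha := h a e e
    have hb := h b e e
    simp only at hab
    rw [hab] at ha
    exact ha.symm.trans hb
  have hLsurj : Function.Surjective (fun x => mul e x) :=
    Finite.injective_iff_surjective.mp hLinj
  have hRsurj : ∀ z, Function.Surjective (fun w => mul w z) := by
    intro z x
    exact ⟨mul (mul (mul e x) (mul e z)) e, h x e z⟩
  have hRinj : ∀ z, Function.Injective (fun w => mul w z) := by
    intro z
    exact Finite.injective_iff_surjective.mpr (hRsurj z)
  let R : M → Equiv.Perm M := fun a => Equiv.ofBijective (fun w => mul w a) ⟨hRinj a, hRsurj a⟩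
  let Lp : Equiv.Perm M := Equiv.ofBijective (fun x => mul e x) ⟨hLinj, hLsurj⟩
  have hRapp : ∀ a w, R a w = mul w a := fun a w => rfl
  have hLapp : ∀ w, Lp w = mul e w := fun w => rfl
  have h1 : ∀ y z : M, R z * R y * R (mul y z) * Lp = 1 := by
    intro y z
    ext w
    simpa [Equiv.Perm.mul_apply, hRapp, hLapp] using h w y z
  have hRinjective : Function.Injective R := by
    intro a b hab
    have := DFunLike.congr_fun hab e
    rw [hRapp, hRapp] at this
    exact hLinj this
  have d1 : ∀ y z, R (mul y z) = (R y)⁻¹ * (R z)⁻¹ * Lp⁻¹ := by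
    intro y z
    calc R (mul y z)
        = (R y)⁻¹ * ((R z)⁻¹ * ((R z * R y * R (mul y z) * Lp) * Lp⁻¹)) := by group
      _ = (R y)⁻¹ * ((R z)⁻¹ * ((1 : Equiv.Perm M) * Lp⁻¹)) := by rw [h1 y z]
      _ = (R y)⁻¹ * (R z)⁻¹ * Lp⁻¹ := by group
  obtain ⟨s, hs⟩ := hRsurj e e
  simp only at hs
  -- hs : mul s e = e
  have d4 : ∀ y, R (Lp.symm (mul y e)) = R e * R y * (R e)⁻¹ := by
    intro y
    have h3 : R (mul e (Lp.symm (mul y e)))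
        = (R e)⁻¹ * (R (Lp.symm (mul y e)))⁻¹ * Lp⁻¹ := d1 e (Lp.symm (mul y e))
    have hLt : mul e (Lp.symm (mul y e)) = mul y e := Lp.apply_symm_apply (mul y e)
    rw [hLt, d1 y e] at h3
    -- h3 : (R y)⁻¹ * (R e)⁻¹ * Lp⁻¹ = (R e)⁻¹ * (R (Lp.symm (mul y e)))⁻¹ * Lp⁻¹
    calc R (Lp.symm (mul y e))
        = (R e * ((R e)⁻¹ * (R (Lp.symm (mul y e)))⁻¹ * Lp⁻¹) * Lp)⁻¹ := by group
      _ = (R e * ((R y)⁻¹ * (R e)⁻¹ * Lp⁻¹) * Lp)⁻¹ := by rw [← h3]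
      _ = R e * R y * (R e)⁻¹ := by group
  have hinv : (R e)⁻¹ e = s := by
    apply (R e).injective
    rw [← Equiv.Perm.mul_apply, mul_inv_cancel, Equiv.Perm.one_apply]
    rw [hRapp, hs]
  have hsy : ∀ y, mul s y = y := by
    intro y
    have he := DFunLike.congr_fun (d4 y) e
    rw [Equiv.Perm.mul_apply, Equiv.Perm.mul_apply, hinv] at he
    rw [hRapp, hRapp] at he
    have hLt : mul e (Lp.symm (mul y e)) = mul y e := Lp.apply_symm_apply (mul y e)
    rw [hLt] at he
    -- he : mul y e = mul (mul s y) e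
    exact (hRinj e he).symm
  have hss : mul s s = s := hsy s
  have hd : R s * R s * R s = Lp⁻¹ := by
    have h0 : R s * R s * R (mul s s) = Lp⁻¹ := by
      calc R s * R s * R (mul s s)
          = (R s * R s * R (mul s s) * Lp) * Lp⁻¹ := by group
        _ = (1 : Equiv.Perm M) * Lp⁻¹ := by rw [h1 s s]
        _ = Lp⁻¹ := by group
    rwa [hss] at h0
  have hes : mul e s = s := by
    have h5 := DFunLike.congr_fun hd s
    rw [Equiv.Perm.mul_apply, Equiv.Perm.mul_apply, hRapp, hRapp, hRapp, hss, hss] at h5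
    rw [hss] at h5
    -- h5 : s = Lp⁻¹ s
    have := congrArg Lp h5
    rw [← Equiv.Perm.mul_apply, mul_inv_cancel, Equiv.Perm.one_apply, hLapp] at this
    exact this
  have d9 : ∀ z, R z * R s * R z = Lp⁻¹ := by
    intro z
    have h0 := h1 s z
    rw [hsy z] at h0
    calc R z * R s * R z
        = (R z * R s * R z * Lp) * Lp⁻¹ := by group
      _ = (1 : Equiv.Perm M) * Lp⁻¹ := by rw [h0]
      _ = Lp⁻¹ := by group
  have d10 : Lp⁻¹ = R s * R e * R s := by
    have h0 : R (mul e s) = (R e)⁻¹ * (R s)⁻¹ * Lp⁻¹ := d1 e s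
    rw [hes] at h0
    calc Lp⁻¹
        = R s * R e * ((R e)⁻¹ * (R s)⁻¹ * Lp⁻¹) := by group
      _ = R s * R e * R s := by rw [← h0]
  have hRsP : R s = R e := by
    have h0 : R s * R s * R s = R s * R e * R s := by rw [d9 s, d10]
    exact mul_left_cancel (mul_right_cancel h0)
  have hse : s = e := hRinjective hRsP
  have hle : ∀ y, mul e y = y := by
    intro y
    rw [← hse]
    exact hsy y
  have hLp1 : Lp = 1 := Equiv.ext fun x => hle x
  have d13 : ∀ y z, R (mul y z) = (R y)⁻¹ * (R z)⁻¹ := by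
    intro y z
    have := d1 y z
    rw [hLp1] at this
    simpa using this
  have d9' : ∀ z, R z * R e * R z = 1 := by
    intro z
    have := d9 z
    rw [hse, hLp1] at this
    simpa using this
  have hP : ∀ z, R e = (R z)⁻¹ * (R z)⁻¹ := by
    intro z
    calc R e
        = (R z)⁻¹ * (R z * R e * R z) * (R z)⁻¹ := by group
      _ = (R z)⁻¹ * (1 : Equiv.Perm M) * (R z)⁻¹ := by rw [d9' z]
      _ = (R z)⁻¹ * (R z)⁻¹ := by group
  have hxx : ∀ y, mul y y = e := by
    intro y
    apply hRinjective
    rw [d13 y y, ← hP y]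
  have hye : ∀ z, mul z e = z := by
    intro z
    have h0 := DFunLike.congr_fun (d9' z) e
    rw [Equiv.Perm.mul_apply, Equiv.Perm.mul_apply, hRapp, hRapp, hRapp, hle z] at h0
    -- h0 : mul (mul z e) z = 1 e = e
    have h1' : mul z z = e := hxx z
    have : R z (mul z e) = R z z := by
      rw [hRapp, hRapp]
      simp only [Equiv.Perm.one_apply] at h0
      rw [h0, h1']
    exact (R z).injective this
  have hRe1 : R e = 1 := Equiv.ext fun x => hye x
  have hRR : ∀ z, (R z)⁻¹ = R z := by
    intro z
    have h0 : (R z)⁻¹ * (R z)⁻¹ = 1 := by rw [← hP z, hRe1]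
    have := eq_inv_of_mul_eq_one_left h0
    rwa [inv_inv] at this
  have d13' : ∀ y z, R (mul y z) = R y * R z := by
    intro y z
    rw [d13 y z, hRR, hRR]
  have hcomm : ∀ y z, mul y z = mul z y := by
    intro y z
    have h0 := DFunLike.congr_fun (d13' y z) e
    rw [Equiv.Perm.mul_apply, hRapp, hRapp, hRapp, hle] at h0
    rw [h0, hle]
  have hassoc : ∀ x y z, mul (mul x y) z = mul x (mul y z) := by
    intro x y z
    apply hRinjective
    rw [d13' (mul x y) z, d13' x y, d13' x (mul y z), d13' y z, mul_assoc]
  exact ⟨hassoc, hcomm, hle, hxx⟩
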